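/- Fix x_P ∈ ℂ^α. The map ψ : ℂ^{QR} × ℂ^{L-α} → ℂ^{QR+L-α} defined by ψ(s, x_D) = P(I_R ⊗ XQ)s, where x = (x_P, x_D) and X = diag(x), is holomorphic, and at every point (s, x_D) with all entries of x_D nonzero, its Jacobian matrix J(s, x_D) = ∂(Pȳ)/∂(s, x_D) (the matrix of complex partial derivatives of ψ with respect to the coordinates of s and of x_D) factorizes as J(s, x_D) = J1(x_D)·J2(s)·J3(x_D), where J1(x_D) = P(I_R ⊗ X)P^T, J2(s) = P[I_R ⊗ Q | a_{α+1} | … | a_L], and J3(x_D) = diag(I_{QR}, diag(x_D)^{-1}), with a_i = (I_R ⊗ diag(e_i)Q)s ∈ ℂ^{LR} for i ∈ [1:L]. -/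

import Mathlib

open Matrix Kronecker

noncomputable section

/-- The block-diagonal row-selection matrix `P = diag((I_L)_{I_1}, …, (I_L)_{I_R})` for
arbitrary index sets `I_1, …, I_R ⊆ [1:L]`: row `(m, j)` (with `j ∈ I m`), column
`(m', j')` carries a `1` iff `m = m'` and `j = j'`. -/
def selBlocksSet {L R : ℕ} (I : Fin R → Finset (Fin L)) :
    Matrix ((m : Fin R) × {j : Fin L // j ∈ I m}) (Fin R × Fin L) ℂ :=
  Matrix.of fun r mj => if r.1 = mj.1 ∧ (r.2 : Fin L) = mj.2 then 1 else 0

/-- The vector `a_i = (I_R ⊗ diag(e_i) Q) s ∈ ℂ^{LR}`. -/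
def aVec {L Q R : ℕ} (Qmat : Matrix (Fin L) (Fin Q) ℂ) (s : Fin R × Fin Q → ℂ)
    (i : Fin L) : Fin R × Fin L → ℂ :=
  ((1 : Matrix (Fin R) (Fin R) ℂ) ⊗ₖ
    (Matrix.diagonal (fun j => if j = i then (1 : ℂ) else 0) * Qmat)).mulVec s

/-- The full input vector `x = (x_P, x_D) ∈ ℂ^L` assembled from the pilot symbols
`x_P ∈ ℂ^α` (the first `α` entries) and the data symbols `x_D ∈ ℂ^{L−α}`. -/
def xFull (L α : ℕ) (xP : Fin α → ℂ) (xD : Fin (L - α) → ℂ) : Fin L → ℂ :=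
  fun i => if h : (i : ℕ) < α then xP ⟨i, h⟩
    else xD ⟨(i : ℕ) - α, by have := i.2; omega⟩

lemma selMul {L R : ℕ} (I : Fin R → Finset (Fin L)) {n : Type*} [Fintype n]
    (M : Matrix (Fin R × Fin L) n ℂ) (r : (m : Fin R) × {j : Fin L // j ∈ I m}) (c : n) :
    (selBlocksSet I * M) r c = M (r.1, (r.2 : Fin L)) c := by
  rw [Matrix.mul_apply]
  rw [Fintype.sum_prod_type]
  simp [selBlocksSet, ite_and, Finset.sum_ite_eq]

lemma psi_apply {L Q R α : ℕ} (Qmat : Matrix (Fin L) (Fin Q) ℂ)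
    (I : Fin R → Finset (Fin L)) (xP : Fin α → ℂ)
    (z : (((Fin R × Fin Q) ⊕ Fin (L - α)) → ℂ))
    (r : (m : Fin R) × {j : Fin L // j ∈ I m}) :
    ((selBlocksSet I) *
        ((1 : Matrix (Fin R) (Fin R) ℂ) ⊗ₖ
          (Matrix.diagonal (xFull L α xP (fun j => z (Sum.inr j))) * Qmat))).mulVec
        (fun p => z (Sum.inl p)) r
      = xFull L α xP (fun j => z (Sum.inr j)) (r.2 : Fin L) *
          ∑ q, Qmat (r.2 : Fin L) q * z (Sum.inl (r.1, q)) := by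
  rw [Matrix.mulVec, dotProduct]
  simp only [selMul]
  simp only [Matrix.kroneckerMap_apply, Matrix.mul_apply, Matrix.diagonal_apply,
    Matrix.one_apply]
  rw [Fintype.sum_prod_type]
  simp [ite_and, Finset.sum_ite_eq, Finset.mul_sum, mul_assoc]

lemma sigma_eq {L R : ℕ} {I : Fin R → Finset (Fin L)}
    (r r' : (m : Fin R) × {j : Fin L // j ∈ I m})
    (h1 : r.1 = r'.1) (h2 : (r.2 : Fin L) = (r'.2 : Fin L)) : r = r' := by
  cases r with
  | mk a b =>
    cases r' with
    | mk a' b' =>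
      dsimp at h1 h2
      subst h1
      exact congrArg _ (Subtype.ext h2)

lemma J1_eq {L R : ℕ} (I : Fin R → Finset (Fin L)) (v : Fin L → ℂ) :
    selBlocksSet I * ((1 : Matrix (Fin R) (Fin R) ℂ) ⊗ₖ Matrix.diagonal v) *
      (selBlocksSet I)ᵀ
    = Matrix.diagonal (fun r : (m : Fin R) × {j : Fin L // j ∈ I m} => v (r.2 : Fin L)) := by
  ext r r'
  rw [Matrix.mul_apply]
  simp only [selMul, Matrix.transpose_apply]
  simp only [Matrix.kroneckerMap_apply, Matrix.one_apply, Matrix.diagonal_apply,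
    selBlocksSet, Matrix.of_apply]
  rw [Fintype.sum_prod_type]
  simp only [ite_and, boole_mul, mul_ite, mul_zero, mul_one, ite_mul, zero_mul,
    one_mul]
  rw [Finset.sum_eq_single r'.1]
  · rw [Finset.sum_eq_single ((r'.2 : Fin L))]
    · simp only [if_pos rfl]
      by_cases h : r = r'
      · subst h; simp [Matrix.diagonal_apply]
      · rw [if_neg h]
        by_cases h2 : (r.2 : Fin L) = (r'.2 : Fin L)
        · rw [if_pos h2]
          rw [if_neg (fun h1 => h (sigma_eq r r' h1 h2))]; simp
        · rw [if_neg h2]; simp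
    · intro b _ hb; simp [Ne.symm hb]
    · intro hb; exact absurd (Finset.mem_univ _) hb
  · intro b _ hb; simp [Ne.symm hb]
  · intro hb; exact absurd (Finset.mem_univ _) hb

lemma aVec_apply {L Q R : ℕ} (Qmat : Matrix (Fin L) (Fin Q) ℂ) (s : Fin R × Fin Q → ℂ)
    (i : Fin L) (m : Fin R) (j : Fin L) :
    aVec Qmat s i (m, j) = if j = i then ∑ q, Qmat j q * s (m, q) else 0 := by
  rw [aVec, Matrix.mulVec, dotProduct]
  simp only [Matrix.kroneckerMap_apply, Matrix.one_apply, Matrix.mul_apply,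
    Matrix.diagonal_apply]
  rw [Fintype.sum_prod_type]
  simp [ite_and, Finset.sum_ite_eq, Finset.mul_sum]

/-!
STATEMENT 3: Fix `x_P ∈ ℂ^α`. The map `ψ : ℂ^{QR} × ℂ^{L−α} → ℂ^{QR+L−α}` defined by
`ψ(s, x_D) = P(I_R ⊗ XQ)s`, where `x = (x_P, x_D)` and `X = diag(x)`, is holomorphic,
and at every point `(s, x_D)` with all entries of `x_D` nonzero, its Jacobian matrix
`J(s, x_D) = ∂(Pȳ)/∂(s, x_D)` (the matrix of complex partial derivatives of `ψ` with
respect to the coordinates of `s` and of `x_D`) factorizes as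
`J(s, x_D) = J1(x_D)·J2(s)·J3(x_D)`, where `J1(x_D) = P(I_R ⊗ X)P^T`,
`J2(s) = P[I_R ⊗ Q | a_{α+1} | … | a_L]`, and
`J3(x_D) = diag(I_{QR}, diag(x_D)^{-1})`.
(The joint variable `(s, x_D) ∈ ℂ^{QR} × ℂ^{L−α}` is realized as a function on the sum
type `(Fin R × Fin Q) ⊕ Fin (L−α)`, so that the Jacobian is a single matrix whose
columns are indexed by the coordinates of `s` and of `x_D`; the codomain `ℂ^{QR+L−α}`
is indexed by the rows `(m : Fin R) × {j // j ∈ I m}` of `P`, whose number is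
`QR + L − α` by the cardinality hypothesis; partial derivatives are `fderiv ℂ`
applied to the coordinate direction `Pi.single`. Appended column `j` (0-based) of
`[I_R ⊗ Q | a_{α+1} | … | a_L]` is `a_{α+1+j}` (1-based), i.e. `aVec` at the
`Fin L`-index `α + j` (0-based).) -/
theorem statement3 {L Q R α : ℕ} (hR : 1 ≤ R) (hRQ : R ≤ Q) (hQL : Q < L)
    (hα1 : 1 ≤ α) (hαL : α ≤ L)
    (Qmat : Matrix (Fin L) (Fin Q) ℂ)
    (I : Fin R → Finset (Fin L)) (hIR : I ⟨R - 1, by omega⟩ = Finset.univ)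
    (hsum : ∑ m, (I m).card = Q * R + L - α)
    (xP : Fin α → ℂ)
    (ψ : (((Fin R × Fin Q) ⊕ Fin (L - α)) → ℂ) →
      ((m : Fin R) × {j : Fin L // j ∈ I m}) → ℂ)
    (hψ : ψ = fun z r =>
      ((selBlocksSet I) *
        ((1 : Matrix (Fin R) (Fin R) ℂ) ⊗ₖ
          (Matrix.diagonal (xFull L α xP (fun j => z (Sum.inr j))) * Qmat))).mulVec
        (fun p => z (Sum.inl p)) r) :
    Differentiable ℂ ψ ∧
      ∀ z : ((Fin R × Fin Q) ⊕ Fin (L - α)) → ℂ,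
        (∀ j : Fin (L - α), z (Sum.inr j) ≠ 0) →
        (Matrix.of fun r cc => fderiv ℂ (fun w => ψ w r) z (Pi.single cc 1))
          = (selBlocksSet I *
                ((1 : Matrix (Fin R) (Fin R) ℂ) ⊗ₖ
                  Matrix.diagonal (xFull L α xP (fun j => z (Sum.inr j)))) *
                (selBlocksSet I)ᵀ) *
            (selBlocksSet I *
              Matrix.fromCols ((1 : Matrix (Fin R) (Fin R) ℂ) ⊗ₖ Qmat)
                (Matrix.of fun rj (j : Fin (L - α)) =>
                  aVec Qmat (fun p => z (Sum.inl p))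
                    ⟨α + (j : ℕ), by have := j.2; omega⟩ rj)) *
            Matrix.fromBlocks 1 0 0
              (Matrix.diagonal fun j : Fin (L - α) => (z (Sum.inr j))⁻¹) := by
  subst hψ
  have key : ∀ (z : (((Fin R × Fin Q) ⊕ Fin (L - α)) → ℂ))
      (r : (m : Fin R) × {j : Fin L // j ∈ I m}),
      HasFDerivAt (fun w : (((Fin R × Fin Q) ⊕ Fin (L - α)) → ℂ) =>
          ((selBlocksSet I) *
            ((1 : Matrix (Fin R) (Fin R) ℂ) ⊗ₖ
              (Matrix.diagonal (xFull L α xP (fun j => w (Sum.inr j))) * Qmat))).mulVec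
            (fun p => w (Sum.inl p)) r)
        ((xFull L α xP (fun k => z (Sum.inr k)) (r.2 : Fin L)) •
            (∑ q : Fin Q, Qmat (r.2 : Fin L) q •
              (ContinuousLinearMap.proj (Sum.inl (r.1, q)) :
                ((((Fin R × Fin Q) ⊕ Fin (L - α)) → ℂ) →L[ℂ] ℂ)))
          + (∑ q : Fin Q, Qmat (r.2 : Fin L) q * z (Sum.inl (r.1, q))) •
            (if h : (((r.2 : Fin L)) : ℕ) < α then
                (0 : ((((Fin R × Fin Q) ⊕ Fin (L - α)) → ℂ) →L[ℂ] ℂ))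
              else ContinuousLinearMap.proj
                (Sum.inr ⟨(((r.2 : Fin L)) : ℕ) - α,
                  by have := (r.2 : Fin L).isLt; omega⟩)))
        z := by
    intro z r
    have heq : (fun w : (((Fin R × Fin Q) ⊕ Fin (L - α)) → ℂ) =>
        ((selBlocksSet I) *
          ((1 : Matrix (Fin R) (Fin R) ℂ) ⊗ₖ
            (Matrix.diagonal (xFull L α xP (fun j => w (Sum.inr j))) * Qmat))).mulVec
          (fun p => w (Sum.inl p)) r)
        = fun w => (xFull L α xP (fun k => w (Sum.inr k)) (r.2 : Fin L)) *
            ∑ q, Qmat (r.2 : Fin L) q * w (Sum.inl (r.1, q)) :=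
      funext fun w => psi_apply Qmat I xP w r
    rw [heq]
    have hF : HasFDerivAt
        (fun w : (((Fin R × Fin Q) ⊕ Fin (L - α)) → ℂ) =>
          xFull L α xP (fun k => w (Sum.inr k)) (r.2 : Fin L))
        (if h : (((r.2 : Fin L)) : ℕ) < α then
            (0 : ((((Fin R × Fin Q) ⊕ Fin (L - α)) → ℂ) →L[ℂ] ℂ))
          else ContinuousLinearMap.proj
            (Sum.inr ⟨(((r.2 : Fin L)) : ℕ) - α,
              by have := (r.2 : Fin L).isLt; omega⟩)) z := by
      by_cases h : (((r.2 : Fin L)) : ℕ) < α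
      · rw [dif_pos h]
        have h2 : (fun w : (((Fin R × Fin Q) ⊕ Fin (L - α)) → ℂ) =>
            xFull L α xP (fun k => w (Sum.inr k)) (r.2 : Fin L))
            = fun _ => xP ⟨(r.2 : Fin L), h⟩ := funext fun w => by simp [xFull, h]
        rw [h2]; exact hasFDerivAt_const _ _
      · rw [dif_neg h]
        have h2 : (fun w : (((Fin R × Fin Q) ⊕ Fin (L - α)) → ℂ) =>
            xFull L α xP (fun k => w (Sum.inr k)) (r.2 : Fin L))
            = ⇑(ContinuousLinearMap.proj (Sum.inr ⟨(((r.2 : Fin L)) : ℕ) - α,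
                by have := (r.2 : Fin L).isLt; omega⟩) :
                ((((Fin R × Fin Q) ⊕ Fin (L - α)) → ℂ) →L[ℂ] ℂ)) :=
          funext fun w => by simp [xFull, h]
        rw [h2]
        exact ContinuousLinearMap.hasFDerivAt _
    have hG : HasFDerivAt
        (fun w : (((Fin R × Fin Q) ⊕ Fin (L - α)) → ℂ) =>
          ∑ q, Qmat (r.2 : Fin L) q * w (Sum.inl (r.1, q)))
        (∑ q : Fin Q, Qmat (r.2 : Fin L) q •
          (ContinuousLinearMap.proj (Sum.inl (r.1, q)) :
            ((((Fin R × Fin Q) ⊕ Fin (L - α)) → ℂ) →L[ℂ] ℂ))) z := by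
      have h2 : (fun w : (((Fin R × Fin Q) ⊕ Fin (L - α)) → ℂ) =>
          ∑ q, Qmat (r.2 : Fin L) q * w (Sum.inl (r.1, q)))
          = ⇑(∑ q : Fin Q, Qmat (r.2 : Fin L) q •
            (ContinuousLinearMap.proj (Sum.inl (r.1, q)) :
              ((((Fin R × Fin Q) ⊕ Fin (L - α)) → ℂ) →L[ℂ] ℂ))) :=
        funext fun w => by
          simp [ContinuousLinearMap.sum_apply, ContinuousLinearMap.smul_apply,
            smul_eq_mul]
      rw [h2]
      exact (ContinuousLinearMap.hasFDerivAt _)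
    exact hF.mul hG
  constructor
  · rw [differentiable_pi]
    intro r z
    exact (key z r).differentiableAt
  · intro z hz
    ext r cc
    obtain ⟨mr, jv, hjv⟩ := r
    have hL := (key z ⟨mr, jv, hjv⟩).fderiv
    rw [Matrix.of_apply, hL]
    erw [J1_eq, Matrix.mul_assoc, Matrix.diagonal_mul, Matrix.mul_apply,
      Fintype.sum_sum_type]
    obtain ⟨m, q⟩ | k := cc <;> by_cases h : (jv : ℕ) < α <;>
      simp only [h, selMul, Matrix.fromCols_apply_inl, Matrix.fromCols_apply_inr,
        Matrix.of_apply, aVec_apply, Matrix.fromBlocks_apply₁₁, Matrix.zero_apply,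
        Matrix.fromBlocks_apply₁₂, Matrix.fromBlocks_apply₂₁, Matrix.fromBlocks_apply₂₂,
        Matrix.kroneckerMap_apply, Matrix.one_apply, Matrix.diagonal_apply,
        ContinuousLinearMap.add_apply, ContinuousLinearMap.smul_apply,
        ContinuousLinearMap.sum_apply, ContinuousLinearMap.proj_apply,
        Pi.single_apply, smul_eq_mul, ContinuousLinearMap.zero_apply,
        Sum.inl.injEq, Sum.inr.injEq, Prod.mk.injEq, Pi.zero_apply, reduceCtorEq,
        mul_ite, ite_mul, mul_zero, zero_mul, mul_one, one_mul, ite_and,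
        Finset.sum_ite_eq, Finset.sum_ite_eq', Finset.mem_univ, if_true, if_false,
        Finset.sum_const_zero, add_zero, zero_add, dite_true, dite_false]
    · by_cases hm : mr = m <;> simp [hm, Finset.sum_ite_eq']
    · by_cases hm : mr = m <;> simp [hm, Finset.sum_ite_eq']
    · rw [if_neg (fun he => by
        have h5 : (jv : ℕ) = α + (k : ℕ) := congrArg Fin.val he
        omega)]
    · split_ifs with h1 h2 h2
      · simp only [xFull, dif_neg h, h1]
        field_simp [hz k]
      · exfalso
        have h5 : ((jv : ℕ) - α) = (k : ℕ) := congrArg Fin.val h1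
        have h6 : (jv : ℕ) ≠ α + (k : ℕ) := fun hc => h2 (Fin.ext hc)
        omega
      · exfalso; apply h1
        have h5 : (jv : ℕ) = α + (k : ℕ) := congrArg Fin.val h2
        exact Fin.ext (show ((jv : ℕ) - α) = (k : ℕ) by omega)
      · rfl
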